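/- Let a > 0, α₀ ∈ ℝ, n ∈ ℕ (n ≥ 1), and set λₙ = (πn/(2a))². The function ψₙ(x) = cos(√λₙ(x + a)) − (iα₀/√λₙ) sin(√λₙ(x + a)) on (−a, a) satisfies −ψₙ'' = λₙ ψₙ with ψₙ'(±a) = −iα₀ψₙ(±a), and ∫_{−a}^{a} ψₙ(−x) conj(ψₙ(x)) dx = a·(−1)ⁿ·(λₙ − α₀²)/λₙ. -/

import Mathlib

open Complex

private lemma aux_hasDerivAt (k aa : ℝ) (p q : ℂ) (x : ℝ) :
    HasDerivAt (fun x : ℝ => p * Complex.cos ((k : ℂ) * ((x : ℂ) + aa))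
        + q * Complex.sin ((k : ℂ) * ((x : ℂ) + aa)))
      (p * (-Complex.sin ((k : ℂ) * ((x : ℂ) + aa)) * k)
        + q * (Complex.cos ((k : ℂ) * ((x : ℂ) + aa)) * k)) x := by
  have hz : HasDerivAt (fun z : ℂ => (k : ℂ) * (z + aa)) (k : ℂ) (x : ℝ) := by
    simpa using ((hasDerivAt_id ((x : ℝ) : ℂ)).add_const (aa : ℂ)).const_mul (k : ℂ)
  have hc : HasDerivAt (fun z : ℂ => p * Complex.cos ((k : ℂ) * (z + aa))
      + q * Complex.sin ((k : ℂ) * (z + aa)))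
      (p * (-Complex.sin ((k : ℂ) * (((x : ℝ) : ℂ) + aa)) * k)
        + q * (Complex.cos ((k : ℂ) * (((x : ℝ) : ℂ) + aa)) * k)) ((x : ℝ) : ℂ) :=
    ((((Complex.hasDerivAt_cos _).comp _ hz)).const_mul p).add
      ((((Complex.hasDerivAt_sin _).comp _ hz)).const_mul q)
  exact hc.comp_ofReal

set_option maxHeartbeats 1600000 in
/-- for `λₙ = (πn/(2a))²`, `n ≥ 1`, the function
`ψₙ(x) = cos(√λₙ(x+a)) − (iα₀/√λₙ) sin(√λₙ(x+a))` satisfies `−ψₙ'' = λₙ ψₙ`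
with `ψₙ'(±a) = −iα₀ ψₙ(±a)`, and
`∫_{−a}^{a} ψₙ(−x) conj(ψₙ(x)) dx = a (−1)ⁿ (λₙ − α₀²)/λₙ`. -/
theorem transversal_excited_state
    (a α₀ : ℝ) (ha : 0 < a) (n : ℕ) (hn : 1 ≤ n)
    (k lam : ℝ) (hk : k = Real.pi * n / (2 * a)) (hlam : lam = k ^ 2)
    (ψ : ℝ → ℂ)
    (hψ : ψ = fun x : ℝ => Complex.cos (k * ((x : ℂ) + a))
      - (I * α₀ / k) * Complex.sin (k * ((x : ℂ) + a))) :
    (∀ x : ℝ, deriv (deriv ψ) x = -((lam : ℂ)) * ψ x) ∧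
      deriv ψ a = -(I * α₀) * ψ a ∧
      deriv ψ (-a) = -(I * α₀) * ψ (-a) ∧
      (∫ x in (-a)..a, ψ (-x) * (starRingEnd ℂ) (ψ x))
        = ((a * (-1 : ℝ) ^ n * (lam - α₀ ^ 2) / lam : ℝ) : ℂ) := by
  have hkpos : 0 < k := by
    rw [hk]
    have : (0:ℝ) < (n:ℝ) := by exact_mod_cast hn
    positivity
  have hk0 : (k : ℂ) ≠ 0 := by exact_mod_cast hkpos.ne'
  have hk0' : k ≠ 0 := hkpos.ne'
  have ha0 : (a : ℂ) ≠ 0 := by exact_mod_cast ha.ne'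
  -- first derivative
  have hd1 : ∀ x : ℝ, HasDerivAt ψ
      ((-(k:ℂ)) * Complex.sin ((k : ℂ) * ((x : ℂ) + a))
        + (-(I * α₀)) * Complex.cos ((k : ℂ) * ((x : ℂ) + a))) x := by
    intro x
    have h := aux_hasDerivAt k a 1 (-(I * α₀ / k)) x
    rw [hψ]
    convert h using 1
    · funext y; ring
    · field_simp
  have hderiv : deriv ψ = fun x : ℝ =>
      (-(I * α₀)) * Complex.cos ((k : ℂ) * ((x : ℂ) + a))
        + (-(k:ℂ)) * Complex.sin ((k : ℂ) * ((x : ℂ) + a)) := by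
    funext x
    rw [(hd1 x).deriv]; ring
  refine ⟨?_, ?_, ?_, ?_⟩
  · -- second derivative
    intro x
    have h := aux_hasDerivAt k a (-(I * α₀)) (-(k:ℂ)) x
    rw [hderiv] at *
    rw [h.deriv, hψ, hlam]
    push_cast
    field_simp
    ring
  · -- boundary at a
    have harg : (k : ℂ) * ((a : ℂ) + a) = (((n:ℝ) * Real.pi : ℝ) : ℂ) := by
      push_cast
      rw [hk]
      push_cast
      field_simp
      ring
    have hcos : Real.cos ((n:ℝ) * Real.pi) = (-1)^n := by
      simpa using Real.cos_nat_mul_pi_sub 0 n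
    rw [hderiv, hψ]
    simp only [harg, ← Complex.ofReal_cos, ← Complex.ofReal_sin,
      Real.sin_nat_mul_pi, hcos]
    push_cast
    ring
  · -- boundary at -a
    have harg : (k : ℂ) * ((-a : ℝ) + a) = 0 := by push_cast; ring
    rw [hderiv, hψ]
    simp only [Complex.ofReal_neg, harg]
    norm_num
  · -- the integral
    set r : ℝ := α₀^2 / k^2 with hr
    set m : ℝ := (-1)^n with hm
    have hm2 : m^2 = 1 := by
      rw [hm, ← pow_mul, mul_comm, pow_mul]; norm_num
    set F : ℝ → ℂ := fun x =>
      ((m * (1 - r) / 2 : ℝ) : ℂ) * (x : ℂ)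
        + ((-(I * α₀) * m / (2 * k^2))) * Complex.cos (((2*k : ℝ) : ℂ) * ((x : ℂ) + a))
        + ((m * (1 + r) / (4 * k) : ℝ) : ℂ) * Complex.sin (((2*k : ℝ) : ℂ) * ((x : ℂ) + a))
      with hF
    have hFd : ∀ x ∈ Set.uIcc (-a) a,
        HasDerivAt F (ψ (-x) * (starRingEnd ℂ) (ψ x)) x := by
      intro x _
      have h1 : HasDerivAt (fun x : ℝ => ((m * (1 - r) / 2 : ℝ) : ℂ) * (x : ℂ))
          ((m * (1 - r) / 2 : ℝ) : ℂ) x := by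
        simpa using ((hasDerivAt_id ((x:ℝ):ℂ)).const_mul ((m * (1 - r) / 2 : ℝ) : ℂ)).comp_ofReal
      have h2 := aux_hasDerivAt (2*k) a ((-(I * α₀) * m / (2 * k^2)))
        ((m * (1 + r) / (4 * k) : ℝ) : ℂ) x
      have h := h1.add h2
      rw [hF]
      convert h using 1
      case e'_8 => ext y; simp only [Pi.add_apply]; ring
      case e'_4 => rfl
      -- now the pointwise identity
      have harg : k * (-x + a) = (n:ℝ) * Real.pi - k * (x + a) := by
        rw [hk]; field_simp; ring
      have hCU : Real.cos (k * (-x + a)) = m * Real.cos (k * (x + a)) := by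
        rw [harg, hm]; exact Real.cos_nat_mul_pi_sub _ n
      have hSU : Real.sin (k * (-x + a)) = -(m * Real.sin (k * (x + a))) := by
        rw [harg, hm]; exact Real.sin_nat_mul_pi_sub _ n
      have hC2 : Real.cos (2*k * (x + a)) = 2 * Real.cos (k * (x+a))^2 - 1 := by
        rw [show 2*k*(x+a) = 2*(k*(x+a)) by ring, Real.cos_two_mul]
      have hS2 : Real.sin (2*k * (x + a)) = 2 * Real.sin (k*(x+a)) * Real.cos (k*(x+a)) := by
        rw [show 2*k*(x+a) = 2*(k*(x+a)) by ring, Real.sin_two_mul]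
      have hpy : Real.sin (k*(x+a))^2 = 1 - Real.cos (k*(x+a))^2 := Real.sin_sq _
      -- rewrite everything via real cos/sin
      have e1 : (k : ℂ) * (-(x : ℂ) + a) = ((k * (-x + a) : ℝ) : ℂ) := by push_cast; ring
      have e2 : (k : ℂ) * ((x : ℂ) + a) = ((k * (x + a) : ℝ) : ℂ) := by push_cast; ring
      have e3 : ((2*k : ℝ) : ℂ) * ((x : ℂ) + a) = ((2*k * (x + a) : ℝ) : ℂ) := by push_cast; ring
      rw [hψ]
      simp only [Complex.ofReal_neg, e1, e2, e3, ← Complex.ofReal_cos, ← Complex.ofReal_sin,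
        map_sub, map_mul, map_div₀, Complex.conj_ofReal, Complex.conj_I,
        hCU, hSU, hC2, hS2]
      set C := Real.cos (k*(x+a))
      set S := Real.sin (k*(x+a))
      have hpyC : ((S:ℂ))^2 = 1 - ((C:ℂ))^2 := by exact_mod_cast hpy
      have hmC : ((m:ℂ))^2 = 1 := by exact_mod_cast hm2
      rw [hr]
      push_cast
      field_simp [hk0]
      have hd : ((k:ℂ) ^ 2 * 2 * (2 * (k:ℂ) ^ 2 * ((k:ℂ) ^ 2 * (4 * (k:ℂ))))) ≠ 0 := by
        simp [hk0]
      linear_combination (8*(m:ℂ)*(α₀:ℂ)^2*(S:ℂ)^2) * Complex.I_sq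
        - (8*(m:ℂ)*(α₀:ℂ)^2) * hpyC
    have hψc : Continuous ψ := by rw [hψ]; fun_prop
    have hcont : Continuous fun x : ℝ => ψ (-x) * (starRingEnd ℂ) (ψ x) :=
      (hψc.comp continuous_neg).mul (continuous_star.comp hψc)
    have hint := intervalIntegral.integral_eq_sub_of_hasDerivAt hFd
      (hcont.intervalIntegrable _ _)
    rw [hint]
    simp only [hF]
    have hA : ((2*k : ℝ) : ℂ) * ((a : ℂ) + a) = (((2*n : ℕ):ℝ) * Real.pi : ℝ) := by
      push_cast
      rw [hk]
      push_cast
      field_simp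
      ring
    have hB : ((2*k : ℝ) : ℂ) * (((-a : ℝ) : ℂ) + a) = ((0:ℝ):ℂ) := by push_cast; ring
    have hcos2 : Real.cos (((2*n : ℕ):ℝ) * Real.pi) = 1 := by
      have := Real.cos_nat_mul_pi_sub 0 (2*n)
      simpa [pow_mul] using this
    rw [hA, hB]
    simp only [← Complex.ofReal_cos, ← Complex.ofReal_sin, Real.sin_nat_mul_pi, hcos2,
      Real.cos_zero, Real.sin_zero]
    rw [hlam, hr, hm]
    clear_value F m r
    clear hF hFd hint hcont hψc hd1 hderiv hψ hA hB hcos2 hm2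
    push_cast
    field_simp [hk0]
    ring
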